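/- Suppose the quiver Q is acyclic, in the sense that every path from a vertex to itself is the trivial path. Then the smap functor is well defined on the image of Φ: for any two paths p₁, p₂ : Quiver.Path u v with Φ p₁ = Φ p₂, one has Ψ p₁ = Ψ p₂. Consequently the assignment smap (Φ p) := Ψ p is a well-defined map from the image of Φ to the image of Ψ. -/

import Mathlib

noncomputable section

/-- The type of all arrows of a quiver. -/
abbrev QArr (V : Type) [Quiver.{0} V] : Type := Σ x : V, Σ y : V, x ⟶ y

section STC

variable {V : Type} [Quiver.{0} V] (obj : V → Type) (st : QArr V → Type)

/-- The global state: one state component per arrow. -/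
abbrev GState : Type := ∀ e : QArr V, st e

open Classical in
/-- Update the `e`-component of the global state, leaving the others unchanged. -/
def updState (σ : GState st) (e : QArr V) (x : st e) : GState st :=
  fun e' => if h : e' = e then cast (congrArg st h).symm x else σ e'

variable (φ : ∀ e : QArr V, obj e.1 × st e → obj e.2.1 × st e)

/-- The extension `φ* e` of the fundamental state thread `φ e` to the global state. -/
def phiExt (e : QArr V) : obj e.1 × GState st → obj e.2.1 × GState st :=
  fun z =>
    let r := φ e (z.1, z.2 e)
    (r.1, updState st z.2 e r.2)

/-- `Φ p` : composite of the extensions `φ*` along the arrows of the path `p`. -/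
def Phi {u : V} : ∀ {v : V}, Quiver.Path u v → (obj u × GState st → obj v × GState st)
  | _, .nil => id
  | _, .cons p e => fun z => phiExt obj st φ ⟨_, _, e⟩ (Phi p z)

/-- `ψ e` (curried auxiliary version): the stateful list map of `φ e`. -/
def psiAux (e : QArr V) : List (obj e.1) → st e → List (obj e.2.1) × st e
  | [], σ => ([], σ)
  | x :: xs, σ =>
    let r := φ e (x, σ)
    let r' := psiAux e xs r.2
    (r.1 :: r'.1, r'.2)

/-- `ψ e` : the stateful list map of the fundamental state thread `φ e`. -/
def psi (e : QArr V) : List (obj e.1) × st e → List (obj e.2.1) × st e :=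
  fun z => psiAux obj st φ e z.1 z.2

/-- The extension `ψ* e` of `ψ e` to the global state. -/
def psiExt (e : QArr V) : List (obj e.1) × GState st → List (obj e.2.1) × GState st :=
  fun z =>
    let r := psi obj st φ e (z.1, z.2 e)
    (r.1, updState st z.2 e r.2)

/-- `Ψ p` : composite of the extensions `ψ*` along the arrows of the path `p`. -/
def Psi {u : V} : ∀ {v : V}, Quiver.Path u v → (List (obj u) × GState st → List (obj v) × GState st)
  | _, .nil => id
  | _, .cons p e => fun z => psiExt obj st φ ⟨_, _, e⟩ (Psi p z)

/-- The list of arrows (as elements of `QArr V`) occurring in a path. -/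
def pathArrows {u : V} : ∀ {v : V}, Quiver.Path u v → List (QArr V)
  | _, .nil => []
  | _, .cons p e => ⟨_, _, e⟩ :: pathArrows p

/-- A path is simple if its arrows are pairwise distinct as elements of `QArr V`. -/
def SimplePath {u v : V} (p : Quiver.Path u v) : Prop := (pathArrows p).Nodup

/-- The stateful list map of a function `F : α × S → β × S` (auxiliary curried form). -/
def stmapAux {α β S : Type} (F : α × S → β × S) : List α → S → List β × S
  | [], σ => ([], σ)
  | x :: xs, σ =>
    let r := F (x, σ)
    let r' := stmapAux F xs r.2
    (r.1 :: r'.1, r'.2)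

/-- The stateful list map of a function `F : α × S → β × S`. -/
def stmap {α β S : Type} (F : α × S → β × S) : List α × S → List β × S :=
  fun z => stmapAux F z.1 z.2

end STC

section Aux

variable {V : Type} [Quiver.{0} V] {obj : V → Type} {st : QArr V → Type}
  {φ : ∀ e : QArr V, obj e.1 × st e → obj e.2.1 × st e}

lemma updState_same (σ : GState st) (e : QArr V) (x : st e) :
    updState st σ e x e = x := by simp [updState]

lemma updState_ne (σ : GState st) {e e' : QArr V} (h : e' ≠ e) (x : st e) :
    updState st σ e x e' = σ e' := by simp [updState, h]

lemma updState_self (σ : GState st) (e : QArr V) :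
    updState st σ e (σ e) = σ := by
  funext e'
  by_cases h : e' = e
  · subst h; simp [updState]
  · simp [updState, h]

lemma updState_updState (σ : GState st) (e : QArr V) (x y : st e) :
    updState st (updState st σ e x) e y = updState st σ e y := by
  funext e'
  by_cases h : e' = e
  · subst h; simp [updState]
  · simp [updState, h]

lemma updState_comm (σ : GState st) {e e' : QArr V} (h : e ≠ e') (x : st e) (y : st e') :
    updState st (updState st σ e x) e' y = updState st (updState st σ e' y) e x := by
  funext e''
  by_cases h1 : e'' = e'
  · subst h1
    simp [updState, h, Ne.symm h]
  · by_cases h2 : e'' = e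
    · subst h2; simp [updState, h1]
    · simp [updState, h1, h2]

/-- `F` does not touch the `e`-component of the global state. -/
def Untouched (e : QArr V) {α β : Type} (F : α × GState st → β × GState st) : Prop :=
  (∀ x σ, (F (x, σ)).2 e = σ e) ∧
  (∀ x σ s, F (x, updState st σ e s) = ((F (x, σ)).1, updState st (F (x, σ)).2 e s))

lemma untouched_id (e : QArr V) {α : Type} :
    Untouched e (id : α × GState st → α × GState st) := by
  constructor
  · intro x σ; rfl
  · intro x σ s; rfl

lemma untouched_comp_phiExt {e e' : QArr V} (hne : e' ≠ e) {α : Type}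
    {F : α × GState st → obj e'.1 × GState st} (hF : Untouched e F) :
    Untouched e (fun z => phiExt obj st φ e' (F z)) := by
  obtain ⟨h1, h2⟩ := hF
  constructor
  · intro x σ
    simp only [phiExt]
    rw [updState_ne _ (Ne.symm hne)]
    exact h1 x σ
  · intro x σ s
    simp only [phiExt]
    rw [h2 x σ s]
    simp only
    rw [updState_ne _ hne, updState_comm _ (Ne.symm hne)]

lemma untouched_Phi {e : QArr V} :
    ∀ {u v : V} (p : Quiver.Path u v), e ∉ pathArrows p →
      Untouched e (Phi obj st φ p) := by
  intro u v p
  induction p with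
  | nil => intro _; exact untouched_id e
  | cons p f ih =>
    intro h
    simp only [pathArrows, List.mem_cons, not_or] at h
    exact untouched_comp_phiExt (Ne.symm h.1) (ih h.2)

lemma stmapAux_state {e : QArr V} {α β : Type} {F : α × GState st → β × GState st}
    (h1 : ∀ x σ, (F (x, σ)).2 e = σ e) :
    ∀ (l : List α) (σ : GState st), (stmapAux F l σ).2 e = σ e := by
  intro l
  induction l with
  | nil => intro σ; rfl
  | cons x xs ih =>
    intro σ
    simp only [stmapAux]
    rw [ih, h1]

lemma stmapAux_id {α S : Type} : ∀ (l : List α) (σ : S),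
    stmapAux (id : α × S → α × S) l σ = (l, σ) := by
  intro l
  induction l with
  | nil => intro σ; rfl
  | cons x xs ih => intro σ; simp [stmapAux, ih]

/-- Key interchange lemma. -/
lemma stmapAux_phiExt (e : QArr V) {α : Type} (F : α × GState st → obj e.1 × GState st)
    (h1 : ∀ x σ, (F (x, σ)).2 e = σ e)
    (h2 : ∀ x σ s, F (x, updState st σ e s) = ((F (x, σ)).1, updState st (F (x, σ)).2 e s)) :
    ∀ (l : List α) (σ : GState st) (s : st e),
      stmapAux (fun z => phiExt obj st φ e (F z)) l (updState st σ e s)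
        = ((psiAux obj st φ e (stmapAux F l σ).1 s).1,
           updState st (stmapAux F l σ).2 e (psiAux obj st φ e (stmapAux F l σ).1 s).2) := by
  intro l
  induction l with
  | nil =>
    intro σ s
    simp [stmapAux, psiAux]
  | cons x xs ih =>
    intro σ s
    have hG : phiExt obj st φ e (F (x, updState st σ e s))
        = ((φ e ((F (x, σ)).1, s)).1,
           updState st (F (x, σ)).2 e (φ e ((F (x, σ)).1, s)).2) := by
      rw [h2 x σ s]
      simp only [phiExt, updState_same, updState_updState]
    simp only [stmapAux, psiAux]
    rw [hG, ih (F (x, σ)).2 (φ e ((F (x, σ)).1, s)).2]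

lemma Psi_eq_stmap_Phi :
    ∀ {u v : V} (p : Quiver.Path u v), SimplePath p →
      Psi obj st φ p = stmap (Phi obj st φ p) := by
  intro u v p
  induction p with
  | nil =>
    intro _
    funext z
    simp only [Psi, Phi, stmap, stmapAux_id]
    rfl
  | cons p f ih =>
    intro hs
    have hs' : (⟨_, _, f⟩ : QArr V) ∉ pathArrows p ∧ SimplePath p := by
      simpa [SimplePath, pathArrows, List.nodup_cons] using hs
    obtain ⟨h1, h2⟩ := untouched_Phi (e := ⟨_, _, f⟩) p hs'.1
    funext z
    obtain ⟨l, σ⟩ := z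
    have hP : Psi obj st φ (p.cons f) (l, σ)
        = psiExt obj st φ ⟨_, _, f⟩ (Psi obj st φ p (l, σ)) := rfl
    rw [hP, ih hs'.2]
    have key := stmapAux_phiExt (φ := φ) ⟨_, _, f⟩ (Phi obj st φ p) h1 h2 l σ
      (σ ⟨_, _, f⟩)
    rw [updState_self] at key
    simp only [stmap, psiExt, psi, Phi]
    have hst := stmapAux_state h1 l σ
    rw [hst, key]

lemma mem_pathArrows_nonempty {u w : V} (p : Quiver.Path u w) (a : QArr V)
    (h : a ∈ pathArrows p) : Nonempty (Quiver.Path a.2.1 w) := by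
  induction p with
  | nil => simp [pathArrows] at h
  | cons p f ih =>
    simp only [pathArrows, List.mem_cons] at h
    rcases h with h | h
    · subst h; exact ⟨Quiver.Path.nil⟩
    · obtain ⟨r⟩ := ih h
      exact ⟨r.cons f⟩

lemma simple_of_acyclic (hac : ∀ (v : V) (p : Quiver.Path v v), p = Quiver.Path.nil) :
    ∀ {u v : V} (p : Quiver.Path u v), SimplePath p := by
  intro u v p
  induction p with
  | nil => simp [SimplePath, pathArrows]
  | cons p f ih =>
    simp only [SimplePath, pathArrows, List.nodup_cons]
    refine ⟨fun hmem => ?_, ih⟩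
    obtain ⟨r⟩ := mem_pathArrows_nonempty p ⟨_, _, f⟩ hmem
    have hcyc := hac _ ((Quiver.Path.nil.cons f).comp r)
    have := congrArg Quiver.Path.length hcyc
    simp [Quiver.Path.length_comp] at this

end Aux

/-- if the quiver is acyclic, `smap` is well defined on the image of `Φ`:
`Φ p₁ = Φ p₂` implies `Ψ p₁ = Ψ p₂`, so `smap (Φ p) := Ψ p` is a well-defined map
from the image of `Φ` to the image of `Ψ`. -/
theorem smap_well_defined_of_acyclic {V : Type} [Quiver.{0} V] (obj : V → Type)
    (st : QArr V → Type)
    (φ : ∀ e : QArr V, obj e.1 × st e → obj e.2.1 × st e)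
    (hac : ∀ (v : V) (p : Quiver.Path v v), p = Quiver.Path.nil) :
    ∀ (u v : V) (p₁ p₂ : Quiver.Path u v),
      Phi obj st φ p₁ = Phi obj st φ p₂ → Psi obj st φ p₁ = Psi obj st φ p₂ := by
  intro u v p₁ p₂ h
  rw [Psi_eq_stmap_Phi p₁ (simple_of_acyclic hac p₁),
      Psi_eq_stmap_Phi p₂ (simple_of_acyclic hac p₂), h]
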